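/- arXiv:1208.0357 — 2 statements merged into one kernel-verified Lean document; each statement's English description precedes it below -/
import Mathlib

section
/- Let ℓ, m ≥ 2 be integers, α = ℓm+1, β = m. A finite sequence [n_1, …, n_k] of integers with |n_i| ≥ 2 for all i satisfies cf[n_1, …, n_k] = (β−α)/α if and only if it equals the length-ℓ sequence C with C_i = (−1)^i·2 for 1 ≤ i ≤ ℓ−1 and C_ℓ = (−1)^ℓ·(m+1). -/
/-- The continued fraction value `cf [n_1, …, n_k] = 1/(n_1 + 1/(n_2 + ⋯ + 1/n_k))`. -/
def cf : List ℤ → ℚ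
  | [] => 0
  | n :: L => 1 / ((n : ℚ) + cf L)

def aq (m k : ℕ) : ℚ := k * m + 1

def seqC (m : ℕ) : ℕ → ℤ → List ℤ
  | 0, _ => []
  | 1, s => [s * (m + 1)]
  | (k+2), s => 2 * s :: seqC m (k+1) (-s)

lemma seqC_one (m : ℕ) (s : ℤ) : seqC m 1 s = [s * (m + 1)] := rfl
lemma seqC_succ_succ (m k : ℕ) (s : ℤ) :
    seqC m (k+2) s = 2 * s :: seqC m (k+1) (-s) := rfl

lemma aq_pos (m k : ℕ) : 0 < aq m k := by
  unfold aq; positivity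

lemma cf_abs_lt (L : List ℤ) (h : ∀ n ∈ L, 2 ≤ |n|) : |cf L| < 1 := by
  induction L with
  | nil => simp [cf]
  | cons n L ih =>
    have h1 : |cf L| < 1 := ih (fun x hx => h x (List.mem_cons_of_mem _ hx))
    have hn : (2:ℚ) ≤ |(n:ℚ)| := by exact_mod_cast h n List.mem_cons_self
    have h2 : 1 < |(n:ℚ) + cf L| := by
      have := abs_sub_abs_le_abs_sub (n:ℚ) (-(cf L))
      simp only [sub_neg_eq_add, abs_neg] at this
      linarith
    show |1 / ((n:ℚ) + cf L)| < 1
    rw [abs_div, abs_one, div_lt_one (by linarith)]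
    linarith

lemma cf_denom_ne (n : ℤ) (L : List ℤ) (h : ∀ x ∈ n :: L, 2 ≤ |x|) :
    (n:ℚ) + cf L ≠ 0 := by
  have h1 : |cf L| < 1 := cf_abs_lt L (fun x hx => h x (List.mem_cons_of_mem _ hx))
  have hn : (2:ℚ) ≤ |(n:ℚ)| := by exact_mod_cast h n List.mem_cons_self
  intro h0
  have := abs_sub_abs_le_abs_sub (n:ℚ) (-(cf L))
  simp only [sub_neg_eq_add, abs_neg, h0, abs_zero] at this
  linarith

lemma cf_cons_ne_zero (n : ℤ) (L : List ℤ) (h : ∀ x ∈ n :: L, 2 ≤ |x|) :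
    cf (n :: L) ≠ 0 :=
  one_div_ne_zero (cf_denom_ne n L h)

lemma cf_seqC (m : ℕ) (hm : 1 ≤ m) :
    ∀ k : ℕ, ∀ s : ℤ, (s = 1 ∨ s = -1) →
      cf (seqC m (k+1) s) = s * aq m k / aq m (k+1) := by
  intro k
  induction k with
  | zero =>
    have h1 : (0:ℚ) < (m:ℚ) + 1 := by positivity
    rintro s (rfl | rfl)
    · simp [seqC, cf, aq]
    · simp only [zero_add, seqC_one, cf, aq]
      push_cast
      rw [div_eq_div_iff (by intro h; rw [← h] at h1; linarith) (by positivity)]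
      ring
  | succ k ih =>
    have hA : (0:ℚ) < (k:ℚ) * m + 1 := by positivity
    have hB : (0:ℚ) < ((k:ℚ)+1) * m + 1 := by positivity
    have hC : (0:ℚ) < ((k:ℚ)+1+1) * m + 1 := by positivity
    have hm' : (1:ℚ) ≤ (m:ℚ) := by exact_mod_cast hm
    rintro s (rfl | rfl)
    · rw [seqC_succ_succ, cf, ih (-1) (by simp)]
      unfold aq
      push_cast
      have hd : (2:ℚ) + -1 * ((k:ℚ) * m + 1) / (((k:ℚ)+1) * m + 1)
          = (((k:ℚ)+1+1) * m + 1) / (((k:ℚ)+1) * m + 1) := by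
        field_simp; ring
      rw [hd, one_div_div, one_mul]
    · rw [seqC_succ_succ, cf]
      simp only [neg_neg]
      rw [ih 1 (by simp)]
      unfold aq
      push_cast
      have hd : (-2:ℚ) + 1 * ((k:ℚ) * m + 1) / (((k:ℚ)+1) * m + 1)
          = -((((k:ℚ)+1+1) * m + 1) / (((k:ℚ)+1) * m + 1)) := by
        field_simp; ring
      rw [hd, div_neg, one_div_div]
      ring

lemma key (m : ℕ) (hm : 1 ≤ m) :
    ∀ k : ℕ, ∀ s : ℤ, (s = 1 ∨ s = -1) → ∀ L : List ℤ,
      (∀ n ∈ L, 2 ≤ |n|) → cf L = s * aq m k / aq m (k+1) →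
      L = seqC m (k+1) s := by
  intro k
  induction k with
  | zero =>
    rintro s hs L hL hv
    have hm1 : (0:ℚ) < (m:ℚ) + 1 := by positivity
    have hs0 : (s:ℚ) ≠ 0 := by rcases hs with rfl | rfl <;> norm_num
    have hss : (s:ℚ) * s = 1 := by rcases hs with rfl | rfl <;> norm_num
    have hv' : cf L = (s:ℚ) / ((m:ℚ) + 1) := by
      rw [hv]; unfold aq; push_cast; ring
    have hvne : cf L ≠ 0 := by
      rw [hv']; exact div_ne_zero hs0 hm1.ne'
    match L with
    | [] => simp [cf] at hvne
    | n :: L' =>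
      have hL' : ∀ x ∈ L', 2 ≤ |x| := fun x hx => hL x (List.mem_cons_of_mem _ hx)
      have ht : |cf L'| < 1 := cf_abs_lt L' hL'
      have hden : (n:ℚ) + cf L' ≠ 0 := cf_denom_ne n L' hL
      have hv2 : 1 / ((n:ℚ) + cf L') = (s:ℚ) / ((m:ℚ) + 1) := hv'
      have heq : (1:ℚ) * ((m:ℚ)+1) = (s:ℚ) * ((n:ℚ) + cf L') :=
        (div_eq_div_iff hden hm1.ne').mp hv2
      have heq2 : cf L' = (s:ℚ) * ((m:ℚ)+1) - n := by
        linear_combination (-(s:ℚ)) * heq - ((n:ℚ) + cf L') * hss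
      have hint : cf L' = ((s * ((m:ℤ)+1) - n : ℤ) : ℚ) := by
        rw [heq2]; push_cast; ring
      have hz : (s * ((m:ℤ)+1) - n : ℤ) = 0 := by
        have h1 : |((s * ((m:ℤ)+1) - n : ℤ) : ℚ)| < 1 := by rw [← hint]; exact ht
        have h2 : |(s * ((m:ℤ)+1) - n : ℤ)| < 1 := by exact_mod_cast h1
        have h3 := abs_lt.mp h2
        omega
      have hn : n = s * ((m:ℤ)+1) := by omega
      have hcf0 : cf L' = 0 := by rw [hint]; exact_mod_cast hz
      have hL'nil : L' = [] := by
        match L' with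
        | [] => rfl
        | x :: L'' => exact absurd hcf0 (cf_cons_ne_zero x L'' hL')
      subst hL'nil
      rw [seqC_one, hn]
  | succ k ih =>
    rintro s hs L hL hv
    have hm' : (1:ℚ) ≤ (m:ℚ) := by exact_mod_cast hm
    have hA : (0:ℚ) < (k:ℚ) * m + 1 := by positivity
    have hB : (0:ℚ) < ((k:ℚ)+1) * m + 1 := by positivity
    have hC : (0:ℚ) < ((k:ℚ)+1+1) * m + 1 := by positivity
    have hs0 : (s:ℚ) ≠ 0 := by rcases hs with rfl | rfl <;> norm_num
    have hss : (s:ℚ) * s = 1 := by rcases hs with rfl | rfl <;> norm_num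
    have haqA : aq m k = (k:ℚ) * m + 1 := by unfold aq; push_cast; ring
    have haqB : aq m (k+1) = ((k:ℚ)+1) * m + 1 := by unfold aq; push_cast; ring
    have haqC : aq m (k+2) = ((k:ℚ)+1+1) * m + 1 := by unfold aq; push_cast; ring
    have hvne : cf L ≠ 0 := by
      rw [hv, haqB, haqC]
      exact div_ne_zero (mul_ne_zero hs0 hB.ne') hC.ne'
    match L with
    | [] => simp [cf] at hvne
    | n :: L' =>
      have hL' : ∀ x ∈ L', 2 ≤ |x| := fun x hx => hL x (List.mem_cons_of_mem _ hx)
      have ht : |cf L'| < 1 := cf_abs_lt L' hL'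
      have hden : (n:ℚ) + cf L' ≠ 0 := cf_denom_ne n L' hL
      set t := cf L' with htdef
      have hv2 : 1 / ((n:ℚ) + t) = (s:ℚ) * (((k:ℚ)+1) * m + 1) / (((k:ℚ)+1+1) * m + 1) := by
        rw [← haqB, ← haqC]; exact hv
      have heq : (1:ℚ) * (((k:ℚ)+1+1) * m + 1)
          = (s:ℚ) * (((k:ℚ)+1) * m + 1) * ((n:ℚ) + t) :=
        (div_eq_div_iff hden hC.ne').mp hv2
      have heq2 : (s:ℚ) * (((k:ℚ)+1+1) * m + 1) = (((k:ℚ)+1) * m + 1) * ((n:ℚ) + t) := by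
        linear_combination (s:ℚ) * heq + ((((k:ℚ)+1)*m+1)*((n:ℚ)+t)) * hss
      have habs : |(((k:ℚ)+1+1) * m + 1) - (((k:ℚ)+1) * m + 1) * ((s:ℚ) * n)| < ((k:ℚ)+1) * m + 1 := by
        have h1 : (((k:ℚ)+1) * m + 1) * ((s:ℚ) * t)
            = (((k:ℚ)+1+1) * m + 1) - (((k:ℚ)+1) * m + 1) * ((s:ℚ) * n) := by
          linear_combination (-(s:ℚ)) * heq2 + ((((k:ℚ)+1+1)*m+1)) * hss
        rw [← h1, abs_mul, abs_mul, abs_of_pos hB]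
        have hs1 : |(s:ℚ)| = 1 := by rcases hs with rfl | rfl <;> norm_num
        rw [hs1, one_mul]
        nlinarith [ht, hB]
      have hsn_bounds : (0:ℚ) < ((s*n : ℤ):ℚ) ∧ ((s*n : ℤ):ℚ) < 3 := by
        push_cast
        rw [abs_lt] at habs
        constructor <;> nlinarith [habs.1, habs.2, hB, hm']
      have hsn : s * n = 2 := by
        have h2 : 2 ≤ |n| := hL n List.mem_cons_self
        have h2' : 2 ≤ n ∨ 2 ≤ -n := le_abs.mp h2
        have hb1 : (0:ℤ) < s*n := by exact_mod_cast hsn_bounds.1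
        have hb2 : (s*n:ℤ) < 3 := by exact_mod_cast hsn_bounds.2
        rcases hs with rfl | rfl <;> omega
      have hn : n = 2 * s := by rcases hs with rfl | rfl <;> omega
      have htval : t = ((-s : ℤ):ℚ) * aq m k / aq m (k+1) := by
        rw [haqA, haqB, eq_div_iff hB.ne']
        push_cast
        subst hn
        push_cast at heq2
        linear_combination (-1:ℚ) * heq2
      have hL'eq : L' = seqC m (k+1) (-s) :=
        ih (-s) (by rcases hs with rfl | rfl <;> simp) L' hL' htval
      rw [seqC_succ_succ, hn, hL'eq]

lemma seqC_eq_ofFn (m : ℕ) : ∀ k : ℕ, ∀ s : ℤ,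
    seqC m (k+1) s = List.ofFn (fun j : Fin (k+1) =>
      if (j:ℕ) = k then s * (-1)^k * ((m:ℤ)+1) else s * (-1)^((j:ℕ)) * 2) := by
  intro k
  induction k with
  | zero =>
    intro s
    simp [seqC_one, List.ofFn_succ]
  | succ k ih =>
    intro s
    rw [List.ofFn_succ, seqC_succ_succ, ih (-s)]
    refine congrArg₂ List.cons ?_ (congrArg List.ofFn (funext fun j => ?_))
    · show 2 * s = if ((0 : Fin (k+2)) : ℕ) = k + 1 then _ else s * (-1)^(((0 : Fin (k+2)) : ℕ)) * 2
      rw [if_neg (by simp)]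
      simp
      ring
    · show (if (j:ℕ) = k then -s * (-1)^k * ((m:ℤ)+1) else -s * (-1)^((j:ℕ)) * 2)
        = if ((j.succ : Fin (k+2)) : ℕ) = k + 1 then s * (-1)^(k+1) * ((m:ℤ)+1)
          else s * (-1)^(((j.succ : Fin (k+2)) : ℕ)) * 2
      simp only [Fin.val_succ]
      by_cases h : (j:ℕ) = k
      · rw [if_pos h, if_pos (by omega), pow_succ]
        ring
      · rw [if_neg h, if_neg (by omega), pow_succ]
        ring

/-- For `ℓ, m ≥ 2`, `α = ℓm+1`, `β = m`: a sequence of integers all of absolute value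
at least `2` has continued fraction value `(β−α)/α` iff it is the length-`ℓ`
sequence `C` with `C_i = (−1)^i·2` for `1 ≤ i ≤ ℓ−1` and `C_ℓ = (−1)^ℓ·(m+1)`. -/
theorem cf_eq_iff_C (ℓ m : ℕ) (hℓ : 2 ≤ ℓ) (hm : 2 ≤ m)
    (L : List ℤ) (hL : ∀ n ∈ L, 2 ≤ |n|) :
    cf L = ((m : ℚ) - ((ℓ : ℚ) * m + 1)) / ((ℓ : ℚ) * m + 1) ↔
      L = List.ofFn (fun j : Fin ℓ =>
            if (j : ℕ) = ℓ - 1 then (-1) ^ ℓ * ((m : ℤ) + 1)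
            else (-1) ^ ((j : ℕ) + 1) * 2) := by
  obtain ⟨l, rfl⟩ : ∃ l, ℓ = l + 2 := ⟨ℓ - 2, by omega⟩
  have hm1 : 1 ≤ m := by omega
  have h1 : (0:ℚ) < ((l:ℚ)+1) * m + 1 := by positivity
  have h2 : (0:ℚ) < ((l:ℚ)+2) * m + 1 := by positivity
  have hval : ((m : ℚ) - ((↑(l+2) : ℚ) * m + 1)) / ((↑(l+2) : ℚ) * m + 1)
      = ((-1 : ℤ):ℚ) * aq m (l+1) / aq m (l+2) := by
    unfold aq
    push_cast
    rw [div_eq_div_iff (by positivity) (by positivity)]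
    ring
  have hlist : seqC m (l+2) (-1) = List.ofFn (fun j : Fin (l+2) =>
      if (j : ℕ) = (l+2) - 1 then (-1) ^ (l+2) * ((m : ℤ) + 1)
      else (-1) ^ ((j : ℕ) + 1) * 2) := by
    rw [show l + 2 = (l+1) + 1 from rfl, seqC_eq_ofFn]
    congr 1
    funext j
    by_cases h : (j:ℕ) = l + 1
    · have h' : (j:ℕ) = l + 2 - 1 := by omega
      simp [h, h', pow_succ]
      try ring
    · have h' : ¬ ((j:ℕ) = l + 2 - 1) := by omega
      simp [h, h', pow_succ]
      try ring
  constructor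
  · intro h
    rw [← hlist]
    exact key m hm1 (l+1) (-1) (by simp) L hL (by rw [h, hval])
  · intro h
    rw [h, ← hlist, show l + 2 = (l+1) + 1 from rfl,
      cf_seqC m hm1 (l+1) (-1) (by simp)]
    rw [show (l+1) + 1 = l + 2 from rfl]
    exact hval.symm
end

section
/- Let ℓ ≥ 3 and m ≥ 2 be integers, α = ℓm−1, β = m. A finite sequence [n_1, …, n_k] of integers with |n_i| ≥ 2 for all i satisfies cf[n_1, …, n_k] = β/α if and only if it equals A = [ℓ, −m] or it equals the length-m sequence B with B_1 = ℓ−1 and B_i = (−1)^i·2 for 2 ≤ i ≤ m. -/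
private def altL : ℕ → List ℤ
  | 0 => []
  | k+1 => 2 :: (altL k).map (fun x => -x)

private lemma one_lt_denom {a : ℤ} {T : List ℤ} (ha : 2 ≤ |a|)
    (hT : |cf T| < 1) : 1 < |(a:ℚ) + cf T| := by
  have ha' : (2:ℚ) ≤ |(a:ℚ)| := by exact_mod_cast ha
  have key : |(a:ℚ)| ≤ |(a:ℚ) + cf T| + |cf T| := by
    have := abs_add_le ((a:ℚ) + cf T) (-(cf T))
    simpa using this
  linarith

private lemma cf_abs_lt_one : ∀ L : List ℤ, (∀ n ∈ L, 2 ≤ |n|) → |cf L| < 1 := by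
  intro L
  induction L with
  | nil => intro _; simp [cf]
  | cons a T ih =>
    intro h
    have hT := ih (fun n hn => h n (List.mem_cons_of_mem _ hn))
    have ha : 2 ≤ |a| := h a (List.mem_cons_self)
    have h1 := one_lt_denom ha hT
    show |1 / ((a:ℚ) + cf T)| < 1
    rw [one_div, abs_inv]
    exact inv_lt_one_of_one_lt₀ h1

private lemma cf_eq_zero_iff {L : List ℤ} (hL : ∀ n ∈ L, 2 ≤ |n|) :
    cf L = 0 ↔ L = [] := by
  constructor
  · intro h
    cases L with
    | nil => rfl
    | cons a T =>
      exfalso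
      have hT := cf_abs_lt_one T (fun n hn => hL n (List.mem_cons_of_mem _ hn))
      have h1 := one_lt_denom (hL a (List.mem_cons_self)) hT
      have hne : (a:ℚ) + cf T ≠ 0 := by
        intro h0x; rw [h0x] at h1; simp at h1; linarith
      exact (one_div_ne_zero hne) h
  · rintro rfl; rfl

private lemma cf_step {L : List ℤ} (hL : ∀ n ∈ L, 2 ≤ |n|) {q : ℚ}
    (hq : cf L = q) (h0 : q ≠ 0) :
    ∃ a T, L = a :: T ∧ (∀ n ∈ T, 2 ≤ |n|) ∧ 2 ≤ |a| ∧
      cf T = 1/q - a ∧ |1/q - (a:ℚ)| < 1 := by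
  cases L with
  | nil => exact absurd hq.symm h0
  | cons a T =>
    have hT : ∀ n ∈ T, 2 ≤ |n| := fun n hn => hL n (List.mem_cons_of_mem _ hn)
    have ha : 2 ≤ |a| := hL a (List.mem_cons_self)
    have hlt := cf_abs_lt_one T hT
    have h1 := one_lt_denom ha hlt
    have hne : (a:ℚ) + cf T ≠ 0 := by
      intro h0x; rw [h0x] at h1; simp at h1; linarith
    have hq' : 1 / ((a:ℚ) + cf T) = q := hq
    have hinv : 1/q = (a:ℚ) + cf T := by
      rw [← hq', one_div_one_div]
    refine ⟨a, T, rfl, hT, ha, by linarith, ?_⟩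
    have : 1/q - (a:ℚ) = cf T := by linarith
    rw [this]; exact hlt

private lemma cf_neg : ∀ L : List ℤ, cf (L.map (fun x => -x)) = - cf L := by
  intro L
  induction L with
  | nil => simp [cf]
  | cons a T ih =>
    show cf ((-a) :: T.map (fun x => -x)) = - cf (a :: T)
    show 1 / (((-a : ℤ):ℚ) + cf (T.map (fun x => -x))) = -(1 / ((a:ℚ) + cf T))
    rw [ih]; push_cast
    rw [show (-(a:ℚ) + -cf T) = -((a:ℚ) + cf T) by ring]
    rw [one_div, one_div, inv_neg]

private lemma cf_altL : ∀ k : ℕ, cf (altL k) = (k:ℚ)/((k:ℚ)+1) := by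
  intro k
  induction k with
  | zero => simp [altL, cf]
  | succ k ih =>
    show 1 / ((2:ℤ) + cf ((altL k).map (fun x => -x))) = _
    rw [cf_neg, ih]
    have hk : ((k:ℚ)+1) ≠ 0 := by positivity
    have h1 : ((2:ℤ):ℚ) + -((k:ℚ)/((k:ℚ)+1)) = ((k:ℚ)+2)/((k:ℚ)+1) := by
      field_simp; ring
    rw [h1, one_div_div]
    push_cast; ring

private lemma altL_mem : ∀ k : ℕ, ∀ n ∈ altL k, 2 ≤ |n| := by
  intro k
  induction k with
  | zero => simp [altL]
  | succ k ih =>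
    intro n hn
    rcases List.mem_cons.mp hn with rfl | hn
    · norm_num
    · obtain ⟨x, hx, rfl⟩ := List.mem_map.mp hn
      rw [abs_neg]; exact ih x hx

private lemma altL_ofFn : ∀ k : ℕ,
    altL k = List.ofFn (fun i : Fin k => (-1)^(i:ℕ) * 2) := by
  intro k
  induction k with
  | zero => simp [altL]
  | succ k ih =>
    rw [List.ofFn_succ]
    show (2:ℤ) :: (altL k).map (fun x => -x) = _
    congr 1
    rw [ih, List.map_ofFn]
    congr 1
    funext i
    show -((-1)^(i:ℕ) * 2) = _
    simp [pow_succ]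

private lemma B_eq (ℓ : ℕ) (k : ℕ) :
    List.ofFn (fun j : Fin (k+1) =>
      if (j : ℕ) = 0 then (ℓ : ℤ) - 1 else (-1) ^ ((j : ℕ) + 1) * 2)
    = ((ℓ:ℤ) - 1) :: altL k := by
  rw [List.ofFn_succ]
  congr 1
  rw [altL_ofFn]
  congr 1
  funext i
  have : ((i.succ : Fin (k+1)) : ℕ) = (i:ℕ) + 1 := rfl
  simp only [this]
  rw [if_neg (Nat.succ_ne_zero _)]
  rw [show (i:ℕ) + 1 + 1 = (i:ℕ) + 2 from rfl, pow_add]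
  norm_num

private lemma cf_eq_neg_inv {T : List ℤ} (hT : ∀ n ∈ T, 2 ≤ |n|) {c : ℤ}
    (hc : 2 ≤ c) (h : cf T = -1/(c:ℚ)) : T = [-c] := by
  have hc0 : (0:ℚ) < (c:ℚ) := by exact_mod_cast lt_of_lt_of_le (by norm_num) hc
  have hq0 : (-1/(c:ℚ)) ≠ 0 := by
    have : -1/(c:ℚ) < 0 := div_neg_of_neg_of_pos (by norm_num) hc0
    exact ne_of_lt this
  obtain ⟨a, S, rfl, hS, ha, hcfS, hlt⟩ := cf_step hT h hq0
  have h1q : 1/(-1/(c:ℚ)) = -(c:ℚ) := by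
    field_simp
  rw [h1q] at hcfS hlt
  have hab := abs_lt.mp hlt
  have l1 : -(c:ℤ) - 1 < a := by
    have : -(c:ℚ) - 1 < (a:ℚ) := by linarith [hab.1, hab.2]
    exact_mod_cast this
  have l2 : (a:ℤ) < -c + 1 := by
    have : (a:ℚ) < -(c:ℚ) + 1 := by linarith [hab.1, hab.2]
    exact_mod_cast this
  have hac : a = -c := by omega
  subst hac
  have hS0 : cf S = 0 := by rw [hcfS]; push_cast; ring
  rw [(cf_eq_zero_iff hS).mp hS0]

private lemma cf_eq_alt : ∀ (k : ℕ) (T : List ℤ), (∀ n ∈ T, 2 ≤ |n|) →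
    cf T = ((k:ℚ)+1)/((k:ℚ)+2) → T = altL (k+1) := by
  intro k
  induction k with
  | zero =>
    intro T hT h
    have h' : cf T = (1:ℚ)/2 := by rw [h]; norm_num
    have hq0 : ((1:ℚ)/2) ≠ 0 := by norm_num
    obtain ⟨a, S, rfl, hS, ha, hcfS, hlt⟩ := cf_step hT h' hq0
    have h1q : 1/((1:ℚ)/2) = 2 := by norm_num
    rw [h1q] at hcfS hlt
    have hab := abs_lt.mp hlt
    have l1 : (1:ℤ) < a := by
      have : (1:ℚ) < (a:ℚ) := by linarith [hab.1, hab.2]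
      exact_mod_cast this
    have l2 : (a:ℤ) < 3 := by
      have : (a:ℚ) < 3 := by linarith [hab.1, hab.2]
      exact_mod_cast this
    have haa : a = 2 := by omega
    subst haa
    have hS0 : cf S = 0 := by rw [hcfS]; norm_num
    rw [(cf_eq_zero_iff hS).mp hS0]
    rfl
  | succ k ih =>
    intro T hT h
    have hkpos : (0:ℚ) < (k:ℚ) + 2 := by positivity
    have hkpos3 : (0:ℚ) < (k:ℚ) + 3 := by positivity
    have hq0 : (((k:ℚ)+1+1)/((k:ℚ)+1+2)) ≠ 0 := by positivity
    have h' : cf T = ((k:ℚ)+1+1)/((k:ℚ)+1+2) := by rw [h]; push_cast; ring_nf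
    obtain ⟨a, S, rfl, hS, ha, hcfS, hlt⟩ := cf_step hT h' hq0
    have h1q : 1/(((k:ℚ)+1+1)/((k:ℚ)+1+2)) = 1 + 1/((k:ℚ)+2) := by
      rw [one_div_div]; field_simp; ring
    rw [h1q] at hcfS hlt
    have hu1 : (0:ℚ) < 1/((k:ℚ)+2) := by positivity
    have hu2 : 1/((k:ℚ)+2) ≤ 1/2 := by
      rw [div_le_div_iff₀ hkpos (by norm_num)]; linarith [Nat.cast_nonneg (α := ℚ) k]
    have hab := abs_lt.mp hlt
    have l1 : (0:ℤ) < a := by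
      have : (0:ℚ) < (a:ℚ) := by linarith [hab.1, hab.2]
      exact_mod_cast this
    have l2 : (a:ℤ) < 3 := by
      have : (a:ℚ) < 3 := by linarith [hab.1, hab.2]
      exact_mod_cast this
    have haa : a = 2 := by
      rcases le_abs.mp ha with h2 | h2 <;> omega
    subst haa
    have hScf : cf (S.map (fun x => -x)) = ((k:ℚ)+1)/((k:ℚ)+2) := by
      rw [cf_neg, hcfS]
      field_simp
      ring
    have hSmem : ∀ n ∈ S.map (fun x : ℤ => -x), 2 ≤ |n| := by
      intro n hn
      obtain ⟨x, hx, rfl⟩ := List.mem_map.mp hn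
      rw [abs_neg]; exact hS x hx
    have := ih (S.map (fun x => -x)) hSmem hScf
    have hSeq : S = (altL (k+1)).map (fun x => -x) := by
      have := congrArg (List.map (fun x : ℤ => -x)) this
      simpa [List.map_map, Function.comp] using this
    rw [hSeq]
    rfl

/-- For `ℓ ≥ 3`, `m ≥ 2`, `α = ℓm−1`, `β = m`: a sequence of integers all of absolute
value at least `2` has continued fraction value `β/α` iff it is `A = [ℓ, −m]` or the
length-`m` sequence `B` with `B_1 = ℓ−1` and `B_i = (−1)^i·2` for `2 ≤ i ≤ m`. -/
theorem cf_eq_iff_A_or_B' (ℓ m : ℕ) (hℓ : 3 ≤ ℓ) (hm : 2 ≤ m)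
    (L : List ℤ) (hL : ∀ n ∈ L, 2 ≤ |n|) :
    cf L = (m : ℚ) / ((ℓ : ℚ) * m - 1) ↔
      L = [(ℓ : ℤ), -(m : ℤ)] ∨
      L = List.ofFn (fun j : Fin m =>
            if (j : ℕ) = 0 then (ℓ : ℤ) - 1 else (-1) ^ ((j : ℕ) + 1) * 2) := by
  -- basic positivity facts
  have hm0 : (0:ℚ) < (m:ℚ) := by exact_mod_cast Nat.lt_of_lt_of_le (by norm_num) hm
  have hl3 : (3:ℚ) ≤ (ℓ:ℚ) := by exact_mod_cast hℓ
  have hm2 : (2:ℚ) ≤ (m:ℚ) := by exact_mod_cast hm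
  have hd : (0:ℚ) < (ℓ:ℚ) * m - 1 := by nlinarith
  have hq0 : (m:ℚ) / ((ℓ:ℚ) * m - 1) ≠ 0 := by positivity
  have h1q : 1 / ((m:ℚ) / ((ℓ:ℚ) * m - 1)) = (ℓ:ℚ) - 1/(m:ℚ) := by
    rw [one_div_div]; field_simp
  obtain ⟨k, rfl⟩ : ∃ k, m = k + 2 := ⟨m - 2, by omega⟩
  push_cast at hm0 hm2 hd hq0 h1q
  have hk2 : ((k:ℚ)+2) ≠ 0 := by positivity
  have hden : (ℓ:ℚ) * ((k:ℚ)+2) - 1 ≠ 0 := by nlinarith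
  constructor
  · intro h
    rw [show ((k+2:ℕ):ℚ) / ((ℓ:ℚ) * ((k+2:ℕ):ℚ) - 1) =
        ((k:ℚ)+2) / ((ℓ:ℚ) * ((k:ℚ)+2) - 1) by push_cast; ring] at h
    obtain ⟨a, T, rfl, hT, ha, hcfS, hlt⟩ := cf_step hL h hq0
    rw [h1q] at hcfS hlt
    have hu1 : (0:ℚ) < 1/((k:ℚ)+2) := by positivity
    have hu2 : 1/((k:ℚ)+2) ≤ 1/2 := by
      rw [div_le_div_iff₀ (by positivity) (by norm_num)]
      linarith [Nat.cast_nonneg (α := ℚ) k]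
    have hab := abs_lt.mp hlt
    have l1 : (ℓ:ℤ) - 2 < a := by
      have : (ℓ:ℚ) - 2 < (a:ℚ) := by linarith [hab.1, hab.2]
      exact_mod_cast this
    have l2 : (a:ℤ) < (ℓ:ℤ) + 1 := by
      have : (a:ℚ) < (ℓ:ℚ) + 1 := by linarith [hab.1, hab.2]
      exact_mod_cast this
    have : a = (ℓ:ℤ) - 1 ∨ a = (ℓ:ℤ) := by omega
    rcases this with rfl | rfl
    · -- B case
      right
      have hcf' : cf T = ((k:ℚ)+1)/((k:ℚ)+2) := by
        rw [hcfS]; push_cast; field_simp; ring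
      have := cf_eq_alt k T hT hcf'
      rw [this, B_eq ℓ (k+1)]
    · -- A case
      left
      have hcf' : cf T = -1/(((k+2:ℕ):ℤ):ℚ) := by
        rw [hcfS]; push_cast; ring
      have := cf_eq_neg_inv hT (show (2:ℤ) ≤ ((k+2:ℕ):ℤ) by push_cast; omega) hcf'
      rw [this]
  · rintro (rfl | rfl)
    · have e1 : cf [-((k+2:ℕ):ℤ)] = -1/((k:ℚ)+2) := by
        show 1 / (((-((k+2:ℕ):ℤ)):ℚ) + cf []) = _
        show 1 / (((-((k+2:ℕ):ℤ)):ℚ) + 0) = _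
        rw [add_zero, show ((-((k+2:ℕ):ℤ)):ℚ) = -((k:ℚ)+2) by push_cast; ring]
        rw [div_neg, neg_div]
      show 1 / ((ℓ:ℚ) + cf [-((k+2:ℕ):ℤ)]) = _
      rw [e1]
      have e2 : (ℓ:ℚ) + (-1/((k:ℚ)+2)) = ((ℓ:ℚ)*((k:ℚ)+2)-1)/((k:ℚ)+2) := by
        field_simp
        ring
      rw [e2, one_div_div]
      push_cast; ring
    · rw [show (k+2) = (k+1)+1 from rfl, B_eq ℓ (k+1)]
      show 1 / ((((ℓ:ℤ)-1 : ℤ):ℚ) + cf (altL (k+1))) = _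
      rw [cf_altL]
      have e2 : (((ℓ:ℤ)-1 : ℤ):ℚ) + ((k+1:ℕ):ℚ)/(((k+1:ℕ):ℚ)+1)
          = ((ℓ:ℚ)*((k:ℚ)+2)-1)/((k:ℚ)+2) := by
        push_cast
        field_simp
        ring
      rw [e2, one_div_div]
      push_cast; ring
end
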